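/- Let k be a field of characteristic zero, let u_1,…,u_m ∈ ℤ[x]^n, and let θ_U : AddMonoidAlgebra k (ℕ[x]^m) → AddMonoidAlgebra k (ℤ[x]^n) be the monomial substitution homomorphism determined by θ_U(Y^w) = T^{∑_i w_i·u_i}. Let Syz(U) = {f ∈ ℤ[x]^m : ∑_{i=1}^m f_i·u_i = 0}. Then the kernel of θ_U equals the ideal of AddMonoidAlgebra k (ℕ[x]^m) generated by the binomials Y^{f⁺} − Y^{f⁻} for f ∈ Syz(U). (Lemma 4.2: the vanishing ideal of the toric difference variety X_U is the toric difference ideal with support lattice Syz(U).) -/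

import Mathlib

open Polynomial AddMonoidAlgebra

/-- The coefficientwise positive part of an integer polynomial, as a polynomial over ℕ. -/
noncomputable def polyPos (p : Polynomial ℤ) : Polynomial ℕ :=
  ⟨.ofCoeff (p.toFinsupp.coeff.mapRange Int.toNat Int.toNat_zero)⟩

/-- The coefficientwise positive part of a vector of integer polynomials. -/
noncomputable def vecPos {m : ℕ} (f : Fin m → Polynomial ℤ) : Fin m → Polynomial ℕ :=
  fun i => polyPos (f i)

/-- The coefficientwise negative part of a vector of integer polynomials. -/
noncomputable def vecNeg {m : ℕ} (f : Fin m → Polynomial ℤ) : Fin m → Polynomial ℕ :=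
  fun i => polyPos (-(f i))

/-- The additive monoid homomorphism `ℕ[x]^m →+ ℤ[x]^n`, `w ↦ ∑ i, w i • u i`,
where `ℕ[x]` acts on `ℤ[x]^n` through the inclusion `ℕ[x] → ℤ[x]`. -/
noncomputable def expMap {m n : ℕ} (u : Fin m → Fin n → Polynomial ℤ) :
    (Fin m → Polynomial ℕ) →+ (Fin n → Polynomial ℤ) where
  toFun w := ∑ i, ((w i).map (Nat.castRingHom ℤ)) • u i
  map_zero' := by simp
  map_add' a b := by
    simp only [Pi.add_apply, Polynomial.map_add, add_smul]
    exact Finset.sum_add_distrib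

/-- The monomial substitution homomorphism `θ_U` with `θ_U(Y^w) = T^{∑ i, w i • u i}`. -/
noncomputable def thetaU (k : Type*) [CommRing k] {m n : ℕ}
    (u : Fin m → Fin n → Polynomial ℤ) :
    AddMonoidAlgebra k (Fin m → Polynomial ℕ) →ₐ[k]
      AddMonoidAlgebra k (Fin n → Polynomial ℤ) :=
  AddMonoidAlgebra.mapDomainAlgHom k k (expMap u)


lemma polyPos_coeff (p : Polynomial ℤ) (j : ℕ) : (polyPos p).coeff j = (p.coeff j).toNat := rfl

/-- Coefficientwise min of two natural polynomials. -/
noncomputable def polyMin (p q : Polynomial ℕ) : Polynomial ℕ :=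
  ⟨.ofCoeff (Finsupp.zipWith min (min_self 0) p.toFinsupp.coeff q.toFinsupp.coeff)⟩

lemma polyMin_coeff (p q : Polynomial ℕ) (j : ℕ) :
    (polyMin p q).coeff j = min (p.coeff j) (q.coeff j) := rfl

lemma map_polyPos_sub (p : Polynomial ℤ) :
    (polyPos p).map (Nat.castRingHom ℤ) - (polyPos (-p)).map (Nat.castRingHom ℤ) = p := by
  ext j
  simp only [Polynomial.coeff_sub, Polynomial.coeff_map, polyPos_coeff, Polynomial.coeff_neg,
    eq_natCast]
  omega


lemma ker_mapDomainAlgHom (k : Type*) [CommRing k] {M N : Type*} [AddCommMonoid M]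
    [AddCommMonoid N] (φ : M →+ N) :
    RingHom.ker (mapDomainAlgHom k k φ : AddMonoidAlgebra k M →ₐ[k] AddMonoidAlgebra k N) =
      Ideal.span {p : AddMonoidAlgebra k M |
        ∃ a b, φ a = φ b ∧ p = AddMonoidAlgebra.single a 1 - AddMonoidAlgebra.single b 1} := by
  classical
  set θ := (mapDomainAlgHom k k φ : AddMonoidAlgebra k M →ₐ[k] AddMonoidAlgebra k N) with hθdef
  have hθ : ∀ x : AddMonoidAlgebra k M, θ x = AddMonoidAlgebra.mapDomain φ x := fun x => by
    simp [hθdef, mapDomainAlgHom_apply]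
  have hsub : ∀ (f g : AddMonoidAlgebra k M) (x : M), (f - g).coeff x = f.coeff x - g.coeff x := fun _ _ _ => rfl
  set S : Set (AddMonoidAlgebra k M) := {p | ∃ a b, φ a = φ b ∧
    p = AddMonoidAlgebra.single a 1 - AddMonoidAlgebra.single b 1} with hS
  have hgen : ∀ (a b : M) (r : k), φ a = φ b →
      θ ((AddMonoidAlgebra.single a r : AddMonoidAlgebra k M) - AddMonoidAlgebra.single b r) = 0 := by
    intro a b r hab
    rw [map_sub, hθ, hθ, AddMonoidAlgebra.mapDomain_single, AddMonoidAlgebra.mapDomain_single, hab, sub_self]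
  apply le_antisymm
  · intro p hp
    rw [RingHom.mem_ker] at hp
    suffices H : ∀ c (p : AddMonoidAlgebra k M), p.coeff.support.card = c → θ p = 0 →
        p ∈ Ideal.span S from H p.coeff.support.card p rfl hp
    intro c
    induction c using Nat.strong_induction_on with
    | _ c ih =>
      intro p hc hp
      rcases eq_or_ne p 0 with rfl | hne
      · exact zero_mem _
      obtain ⟨a, ha⟩ := Finsupp.support_nonempty_iff.2 (show p.coeff ≠ 0 by simpa using hne)
      have key : ∑ x ∈ p.coeff.support.filter (fun x => φ x = φ a), p.coeff x = 0 := by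
        have h0 : Finsupp.mapDomain φ p.coeff (φ a) = 0 := by
            change (AddMonoidAlgebra.mapDomain φ p).coeff (φ a) = 0; rw [← hθ, hp]; rfl
        rw [Finsupp.mapDomain, Finsupp.sum_apply, Finsupp.sum] at h0
        rw [Finset.sum_filter]
        refine Eq.trans ?_ h0
        refine Finset.sum_congr rfl fun x _ => ?_
        rw [Finsupp.single_apply]
      have hb : ∃ b ∈ p.coeff.support, b ≠ a ∧ φ b = φ a := by
        by_contra hcon
        push_neg at hcon
        have hfilter : p.coeff.support.filter (fun x => φ x = φ a) = {a} := by
          ext x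
          simp only [Finset.mem_filter, Finset.mem_singleton]
          constructor
          · rintro ⟨hx1, hx2⟩
            by_contra hxa
            exact hcon x hx1 hxa hx2
          · rintro rfl; exact ⟨ha, rfl⟩
        rw [hfilter, Finset.sum_singleton] at key
        exact Finsupp.mem_support_iff.1 ha key
      obtain ⟨b, hbsupp, hba, hphib⟩ := hb
      set g : AddMonoidAlgebra k M := AddMonoidAlgebra.single a (p.coeff a) - AddMonoidAlgebra.single b (p.coeff a) with hg
      have hgmem : g ∈ Ideal.span S := by
        have hgeq : g = p.coeff a •
            ((AddMonoidAlgebra.single a 1 : AddMonoidAlgebra k M) - AddMonoidAlgebra.single b 1) := by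
          rw [hg, smul_sub, AddMonoidAlgebra.smul_single, AddMonoidAlgebra.smul_single, smul_eq_mul, mul_one]
        rw [hgeq]
        exact Submodule.smul_of_tower_mem _ _ (Ideal.subset_span ⟨a, b, hphib.symm, rfl⟩)
      have hθg : θ g = 0 := hgen a b (p.coeff a) hphib.symm
      set q : AddMonoidAlgebra k M := p - g with hq
      have hθq : θ q = 0 := by rw [hq, map_sub, hp, hθg, sub_zero]
      have hqa : q.coeff a = 0 := by
        rw [hq, hsub, hg, hsub, AddMonoidAlgebra.coeff_single, AddMonoidAlgebra.coeff_single,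
          Finsupp.single_eq_same, Finsupp.single_eq_of_ne' hba]
        ring
      have hqsupp : q.coeff.support ⊆ p.coeff.support.erase a := by
        intro x hx
        rw [Finsupp.mem_support_iff] at hx
        have hxa : x ≠ a := fun h => hx (h ▸ hqa)
        rw [Finset.mem_erase]
        refine ⟨hxa, Finsupp.mem_support_iff.2 fun hpx => hx ?_⟩
        rcases eq_or_ne x b with rfl | hxb
        · exact absurd hpx (Finsupp.mem_support_iff.1 hbsupp)
        · rw [hq, hsub, hg, hsub, AddMonoidAlgebra.coeff_single, AddMonoidAlgebra.coeff_single,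
            Finsupp.single_eq_of_ne' (Ne.symm hxa),
            Finsupp.single_eq_of_ne' (Ne.symm hxb), hpx]
          ring
      have hcard : q.coeff.support.card < c := by
        calc q.coeff.support.card ≤ (p.coeff.support.erase a).card := Finset.card_le_card hqsupp
          _ < p.coeff.support.card := Finset.card_erase_lt_of_mem ha
          _ = c := hc
      have hqmem : q ∈ Ideal.span S := ih _ hcard q rfl hθq
      have hpq : p = q + g := by rw [hq]; ring
      rw [hpq]
      exact add_mem hqmem hgmem
  · rw [Ideal.span_le]
    rintro p ⟨a, b, hab, rfl⟩
    exact RingHom.mem_ker.2 (hgen a b 1 hab)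

/-- Lemma 4.2: the kernel of `θ_U` is the binomial ideal generated by
`Y^{f⁺} - Y^{f⁻}` for `f` in the syzygy lattice `Syz(U)`. -/
theorem kernel_thetaU_eq_syzygy_lattice_ideal
    (k : Type*) [Field k] [CharZero k] {m n : ℕ}
    (u : Fin m → Fin n → Polynomial ℤ) :
    RingHom.ker (thetaU k u) =
      Ideal.span ((fun f => (AddMonoidAlgebra.single (vecPos f) 1 :
            AddMonoidAlgebra k (Fin m → Polynomial ℕ)) - AddMonoidAlgebra.single (vecNeg f) 1) ''
        {f : Fin m → Polynomial ℤ | ∑ i, f i • u i = 0}) := by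
  classical
  have hexp : ∀ w : Fin m → Polynomial ℕ,
      expMap u w = ∑ i, ((w i).map (Nat.castRingHom ℤ)) • u i := fun _ => rfl
  rw [thetaU, ker_mapDomainAlgHom]
  apply le_antisymm
  · rw [Ideal.span_le]
    rintro p ⟨a, b, hab, rfl⟩
    set f : Fin m → Polynomial ℤ :=
      fun i => (a i).map (Nat.castRingHom ℤ) - (b i).map (Nat.castRingHom ℤ) with hf
    have hfs : ∑ i, f i • u i = 0 := by
      simp only [hf, sub_smul]
      rw [Finset.sum_sub_distrib, ← hexp a, ← hexp b, hab, sub_self]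
    set c : Fin m → Polynomial ℕ := fun i => polyMin (a i) (b i) with hc
    have hpa : c + vecPos f = a := by
      funext i
      apply Polynomial.ext
      intro j
      simp only [Pi.add_apply, Polynomial.coeff_add, hc, polyMin_coeff, vecPos, polyPos_coeff,
        hf, Polynomial.coeff_sub, Polynomial.coeff_map, eq_natCast]
      omega
    have hpb : c + vecNeg f = b := by
      funext i
      apply Polynomial.ext
      intro j
      simp only [Pi.add_apply, Polynomial.coeff_add, hc, polyMin_coeff, vecNeg, polyPos_coeff,
        hf, Polynomial.coeff_neg, Polynomial.coeff_sub, Polynomial.coeff_map, eq_natCast]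
      omega
    have heq : AddMonoidAlgebra.single c (1 : k) *
        (AddMonoidAlgebra.single (vecPos f) (1 : k) - AddMonoidAlgebra.single (vecNeg f) 1) =
        AddMonoidAlgebra.single a (1 : k) - AddMonoidAlgebra.single b 1 := by
      rw [mul_sub, AddMonoidAlgebra.single_mul_single, AddMonoidAlgebra.single_mul_single,
        one_mul, hpa, hpb]
    rw [SetLike.mem_coe, ← heq]
    exact Ideal.mul_mem_left _ _ (Ideal.subset_span ⟨f, hfs, rfl⟩)
  · rw [Ideal.span_le]
    rintro p ⟨g, hg, rfl⟩
    refine Ideal.subset_span ⟨vecPos g, vecNeg g, ?_, rfl⟩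
    have hzero : expMap u (vecPos g) - expMap u (vecNeg g) = 0 := by
      rw [hexp, hexp, ← Finset.sum_sub_distrib]
      have : ∀ i, ((vecPos g i).map (Nat.castRingHom ℤ)) • u i -
          ((vecNeg g i).map (Nat.castRingHom ℤ)) • u i = g i • u i := by
        intro i
        rw [← sub_smul]
        congr 1
        exact map_polyPos_sub (g i)
      rw [Finset.sum_congr rfl fun i _ => this i]
      exact hg
    exact sub_eq_zero.mp hzero
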